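/- Let U be a real Banach space, let α₁, α₂, ξ₁, ξ₂, C > 0, and let (a_ℓ)_{ℓ∈ℕ₀²} be a family of elements of U with ‖a_ℓ‖ ≤ C·2^(−α₁ℓ₁ − α₂ℓ₂) for all ℓ = (ℓ₁, ℓ₂) ∈ ℕ₀² (so that the family is absolutely summable). Then there exists a constant C′ < ∞ (depending only on C, α₁, α₂, ξ₁, ξ₂) such that for every real L > 0, with I_L := {ℓ ∈ ℕ₀² : ξ₁ℓ₁ + ξ₂ℓ₂ ≤ L}, the norm of the sum Σ_{ℓ ∈ ℕ₀² \ I_L} a_ℓ is at most C′ · (1 + L) · 2^(−min(α₁/ξ₁, α₂/ξ₂)·L). -/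

import Mathlib

open Real Finset

lemma geom_tail_aux {m ξ : ℝ} (hm : 0 < m) (hξ : 0 < ξ) (t : ℝ) :
    ∑' n : ℕ, (if ξ * n ≤ t then (0:ℝ) else ((2:ℝ) ^ (-(m * ξ))) ^ n)
      ≤ (1 - (2:ℝ) ^ (-(m * ξ)))⁻¹ * (2:ℝ) ^ (m * ξ) * (2:ℝ) ^ (-(m * max t 0)) := by
  set r : ℝ := (2:ℝ) ^ (-(m * ξ)) with hr
  have hr0 : 0 < r := rpow_pos_of_pos two_pos _
  have hr1 : r < 1 := rpow_lt_one_of_one_lt_of_neg one_lt_two (by nlinarith)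
  set f : ℕ → ℝ := fun n => if ξ * n ≤ t then (0:ℝ) else r ^ n with hf
  have hfle : ∀ n, f n ≤ r ^ n := by
    intro n; by_cases h : ξ * (n:ℝ) ≤ t <;> simp [hf, h, pow_nonneg hr0.le]
  have hf0 : ∀ n, 0 ≤ f n := by
    intro n; by_cases h : ξ * (n:ℝ) ≤ t <;> simp [hf, h, pow_nonneg hr0.le]
  have hgeom : Summable fun n : ℕ => r ^ n := summable_geometric_of_lt_one hr0.le hr1
  have hsum : Summable f := hgeom.of_nonneg_of_le hf0 hfle
  set n₀ : ℕ := ⌊max (t / ξ) 0⌋₊ with hn₀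
  have hsplit := (Summable.sum_add_tsum_nat_add n₀ hsum).symm
  have hfin : ∀ i ∈ Finset.range n₀, f i = 0 := by
    intro i hi
    have hi' : (i:ℝ) + 1 ≤ (n₀:ℝ) := by exact_mod_cast Finset.mem_range.mp hi
    have hfl : (n₀:ℝ) ≤ max (t / ξ) 0 := Nat.floor_le (le_max_right _ _)
    have hlt : (i:ℝ) < max (t / ξ) 0 := by linarith
    rcases le_total (t / ξ) 0 with h | h
    · exfalso
      have : max (t / ξ) 0 = 0 := max_eq_right h
      rw [this] at hlt
      exact absurd hlt (not_lt.mpr (Nat.cast_nonneg i))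
    · have : max (t / ξ) 0 = t / ξ := max_eq_left h
      rw [this] at hlt
      have : ξ * (i:ℝ) ≤ t := by
        rw [mul_comm]
        exact le_of_lt ((lt_div_iff₀ hξ).mp hlt)
      simp [hf, this]
  have htail : ∑' n : ℕ, f (n + n₀) ≤ (1 - r)⁻¹ * r ^ n₀ := by
    have h1 : Summable fun n : ℕ => f (n + n₀) := (summable_nat_add_iff n₀).mpr hsum
    have h2 : Summable fun n : ℕ => r ^ (n + n₀) := (summable_nat_add_iff n₀).mpr hgeom
    calc ∑' n : ℕ, f (n + n₀) ≤ ∑' n : ℕ, r ^ (n + n₀) :=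
          Summable.tsum_le_tsum (fun n => hfle _) h1 h2
      _ = ∑' n : ℕ, r ^ n * r ^ n₀ := by
          congr 1; funext n; rw [pow_add]
      _ = (∑' n : ℕ, r ^ n) * r ^ n₀ := tsum_mul_right
      _ = (1 - r)⁻¹ * r ^ n₀ := by rw [tsum_geometric_of_lt_one hr0.le hr1]
  have hrn : r ^ n₀ ≤ (2:ℝ) ^ (m * ξ) * (2:ℝ) ^ (-(m * max t 0)) := by
    have hmax : max t 0 ≤ ξ * ((n₀:ℝ) + 1) := by
      have h1 : max (t / ξ) 0 < (n₀:ℝ) + 1 := Nat.lt_floor_add_one _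
      have h2 : ξ * max (t / ξ) 0 = max t 0 := by
        rcases le_total t 0 with h | h
        · rw [max_eq_right (div_nonpos_of_nonpos_of_nonneg h hξ.le), max_eq_right h, mul_zero]
        · rw [max_eq_left (div_nonneg h hξ.le), max_eq_left h, mul_div_cancel₀ _ hξ.ne']
      nlinarith
    have hexp : -(m * ξ) * (n₀:ℝ) ≤ m * ξ - m * max t 0 := by nlinarith
    calc r ^ n₀ = (2:ℝ) ^ (-(m * ξ) * (n₀:ℝ)) := by
          rw [hr, ← rpow_natCast ((2:ℝ) ^ (-(m * ξ))) n₀, ← rpow_mul (by norm_num : (0:ℝ) ≤ 2)]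
      _ ≤ (2:ℝ) ^ (m * ξ - m * max t 0) := rpow_le_rpow_of_exponent_le one_le_two hexp
      _ = (2:ℝ) ^ (m * ξ) * (2:ℝ) ^ (-(m * max t 0)) := by
          rw [← rpow_add two_pos]; ring_nf
  calc ∑' n : ℕ, f n = ∑ i ∈ Finset.range n₀, f i + ∑' n : ℕ, f (n + n₀) := hsplit
    _ = ∑' n : ℕ, f (n + n₀) := by rw [Finset.sum_eq_zero hfin, zero_add]
    _ ≤ (1 - r)⁻¹ * r ^ n₀ := htail
    _ ≤ (1 - r)⁻¹ * ((2:ℝ) ^ (m * ξ) * (2:ℝ) ^ (-(m * max t 0))) := by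
        apply mul_le_mul_of_nonneg_left hrn
        exact inv_nonneg.mpr (by linarith)
    _ = (1 - r)⁻¹ * (2:ℝ) ^ (m * ξ) * (2:ℝ) ^ (-(m * max t 0)) := by ring

set_option maxHeartbeats 1600000 in
/-- tail bound for the bias sum. If `‖a_ℓ‖ ≤ C·2^(−α₁ℓ₁ − α₂ℓ₂)` for all
`ℓ ∈ ℕ₀²`, then there is `C′ < ∞` such that for every `L > 0`, the norm of the sum of
`a_ℓ` over the complement of `I_L := {ℓ : ξ₁ℓ₁ + ξ₂ℓ₂ ≤ L}` is at most
`C′·(1 + L)·2^(−min(α₁/ξ₁, α₂/ξ₂)·L)`. -/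
theorem bias_tail_bound
    {U : Type*} [NormedAddCommGroup U] [NormedSpace ℝ U] [CompleteSpace U]
    (α₁ α₂ ξ₁ ξ₂ C : ℝ) (hα₁ : 0 < α₁) (hα₂ : 0 < α₂) (hξ₁ : 0 < ξ₁) (hξ₂ : 0 < ξ₂)
    (hC : 0 < C) (a : ℕ × ℕ → U)
    (ha : ∀ ℓ : ℕ × ℕ, ‖a ℓ‖ ≤ C * 2 ^ (-(α₁ * (ℓ.1 : ℝ) + α₂ * (ℓ.2 : ℝ)))) :
    ∃ C' : ℝ, 0 < C' ∧ ∀ L : ℝ, 0 < L →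
      ‖∑' ℓ : {ℓ : ℕ × ℕ // ¬ (ξ₁ * ℓ.1 + ξ₂ * ℓ.2 ≤ L)}, a ℓ‖
        ≤ C' * (1 + L) * 2 ^ (-(min (α₁ / ξ₁) (α₂ / ξ₂)) * L) := by
  set m : ℝ := min (α₁ / ξ₁) (α₂ / ξ₂) with hmdef
  have hm : 0 < m := lt_min (div_pos hα₁ hξ₁) (div_pos hα₂ hξ₂)
  have hm1 : m * ξ₁ ≤ α₁ := by
    have h := min_le_left (α₁ / ξ₁) (α₂ / ξ₂)
    rw [← hmdef] at h
    calc m * ξ₁ ≤ (α₁ / ξ₁) * ξ₁ := by nlinarith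
      _ = α₁ := div_mul_cancel₀ _ hξ₁.ne'
  have hm2 : m * ξ₂ ≤ α₂ := by
    have h := min_le_right (α₁ / ξ₁) (α₂ / ξ₂)
    rw [← hmdef] at h
    calc m * ξ₂ ≤ (α₂ / ξ₂) * ξ₂ := by nlinarith
      _ = α₂ := div_mul_cancel₀ _ hξ₂.ne'
  set r₁ : ℝ := (2:ℝ) ^ (-(m * ξ₁)) with hr₁def
  set r₂ : ℝ := (2:ℝ) ^ (-(m * ξ₂)) with hr₂def
  have hr₁0 : 0 < r₁ := rpow_pos_of_pos two_pos _
  have hr₂0 : 0 < r₂ := rpow_pos_of_pos two_pos _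
  have hr₁1 : r₁ < 1 := rpow_lt_one_of_one_lt_of_neg one_lt_two (by nlinarith)
  have hr₂1 : r₂ < 1 := rpow_lt_one_of_one_lt_of_neg one_lt_two (by nlinarith)
  set K₁ : ℝ := (1 - r₁)⁻¹ with hK₁def
  set K₂ : ℝ := (1 - r₂)⁻¹ * (2:ℝ) ^ (m * ξ₂) with hK₂def
  have hK₁0 : 0 < K₁ := inv_pos.mpr (by linarith)
  have hK₂0 : 0 < K₂ := mul_pos (inv_pos.mpr (by linarith)) (rpow_pos_of_pos two_pos _)
  clear_value m r₁ r₂ K₁ K₂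
  refine ⟨C * K₂ * (1 / ξ₁ + 1 + K₁), by positivity, ?_⟩
  intro L hL
  -- geometric summables
  have hgeom₁ : Summable fun n : ℕ => r₁ ^ n := summable_geometric_of_lt_one hr₁0.le hr₁1
  have hgeom₂ : Summable fun n : ℕ => r₂ ^ n := summable_geometric_of_lt_one hr₂0.le hr₂1
  set F : ℕ × ℕ → ℝ := fun ℓ => C * (r₁ ^ ℓ.1 * r₂ ^ ℓ.2) with hFdef
  have hpow : ∀ i j : ℕ, r₁ ^ i * r₂ ^ j = (2:ℝ) ^ (-(m * ξ₁ * (i:ℝ) + m * ξ₂ * (j:ℝ))) := by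
    intro i j
    rw [hr₁def, hr₂def, ← rpow_natCast ((2:ℝ) ^ (-(m * ξ₁))) i,
      ← rpow_natCast ((2:ℝ) ^ (-(m * ξ₂))) j,
      ← rpow_mul (by norm_num : (0:ℝ) ≤ 2), ← rpow_mul (by norm_num : (0:ℝ) ≤ 2),
      ← rpow_add two_pos]
    ring_nf
  have hF0 : ∀ ℓ : ℕ × ℕ, 0 ≤ F ℓ := fun ℓ => by
    have := hr₁0.le; have := hr₂0.le; positivity
  have hFa : ∀ ℓ : ℕ × ℕ, ‖a ℓ‖ ≤ F ℓ := by
    intro ℓ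
    refine (ha ℓ).trans ?_
    rw [hFdef]
    simp only
    rw [hpow ℓ.1 ℓ.2]
    have hle : -(α₁ * (ℓ.1:ℝ) + α₂ * (ℓ.2:ℝ)) ≤ -(m * ξ₁ * (ℓ.1:ℝ) + m * ξ₂ * (ℓ.2:ℝ)) := by
      have h1 : (0:ℝ) ≤ (ℓ.1:ℝ) := Nat.cast_nonneg _
      have h2 : (0:ℝ) ≤ (ℓ.2:ℝ) := Nat.cast_nonneg _
      nlinarith
    exact mul_le_mul_of_nonneg_left (rpow_le_rpow_of_exponent_le one_le_two hle) hC.le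
  have hFs : Summable F := by
    have := (hgeom₁.mul_of_nonneg hgeom₂ (fun n => pow_nonneg hr₁0.le n)
      (fun n => pow_nonneg hr₂0.le n)).mul_left C
    exact this
  set S : Set (ℕ × ℕ) := {ℓ : ℕ × ℕ | ¬ (ξ₁ * ℓ.1 + ξ₂ * ℓ.2 ≤ L)} with hSdef
  have hFsS : Summable fun ℓ : S => F ℓ := hFs.subtype S
  have hnormS : Summable fun ℓ : S => ‖a ℓ‖ :=
    hFsS.of_nonneg_of_le (fun ℓ => norm_nonneg _) (fun ℓ => hFa ℓ)
  set G : ℕ × ℕ → ℝ := fun ℓ => if ξ₁ * (ℓ.1:ℝ) + ξ₂ * (ℓ.2:ℝ) ≤ L then 0 else F ℓ with hGdef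
  have hGind : S.indicator F = G := by
    funext ℓ
    by_cases h : ξ₁ * (ℓ.1:ℝ) + ξ₂ * (ℓ.2:ℝ) ≤ L <;>
      simp [Set.indicator_apply, hSdef, hGdef, h]
  have hG0 : ∀ ℓ, 0 ≤ G ℓ := by
    intro ℓ
    by_cases h : ξ₁ * (ℓ.1:ℝ) + ξ₂ * (ℓ.2:ℝ) ≤ L <;> simp [hGdef, h, hF0 ℓ]
  have hGF : ∀ ℓ, G ℓ ≤ F ℓ := by
    intro ℓ
    by_cases h : ξ₁ * (ℓ.1:ℝ) + ξ₂ * (ℓ.2:ℝ) ≤ L <;> simp [hGdef, h, hF0 ℓ]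
  have hGs : Summable G := hFs.of_nonneg_of_le hG0 hGF
  have hGinner : ∀ i : ℕ, Summable fun j : ℕ => G (i, j) := by
    intro i
    refine ((hgeom₂.mul_left (C * r₁ ^ i)).of_nonneg_of_le (fun j => hG0 (i, j)) ?_)
    intro j
    refine (hGF (i, j)).trans ?_
    rw [hFdef]
    simp only
    ring_nf
    exact le_refl _
  -- inner bound
  set g : ℕ → ℝ := fun i =>
    C * K₂ * (r₁ ^ i * (2:ℝ) ^ (-(m * max (L - ξ₁ * (i:ℝ)) 0))) with hgdef
  have hinner_le : ∀ i : ℕ, (∑' j : ℕ, G (i, j)) ≤ g i := by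
    intro i
    have heq : (∑' j : ℕ, G (i, j))
        = (C * r₁ ^ i) * ∑' j : ℕ, (if ξ₂ * (j:ℝ) ≤ L - ξ₁ * (i:ℝ) then (0:ℝ) else r₂ ^ j) := by
      rw [← tsum_mul_left]
      congr 1; funext j
      by_cases h : ξ₂ * (j:ℝ) ≤ L - ξ₁ * (i:ℝ)
      · have h' : ξ₁ * (i:ℝ) + ξ₂ * (j:ℝ) ≤ L := by linarith
        simp [hGdef, h, h']
      · have h' : ¬ (ξ₁ * (i:ℝ) + ξ₂ * (j:ℝ) ≤ L) := by
          intro hcon; exact h (by linarith)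
        simp [hGdef, hFdef, h, h']
        ring
    rw [heq, hgdef]
    have haux := geom_tail_aux hm hξ₂ (L - ξ₁ * (i:ℝ))
    rw [← hr₂def] at haux
    calc (C * r₁ ^ i) * ∑' j : ℕ, (if ξ₂ * (j:ℝ) ≤ L - ξ₁ * (i:ℝ) then (0:ℝ) else r₂ ^ j)
        ≤ (C * r₁ ^ i) * ((1 - r₂)⁻¹ * (2:ℝ) ^ (m * ξ₂)
            * (2:ℝ) ^ (-(m * max (L - ξ₁ * (i:ℝ)) 0))) := by
          apply mul_le_mul_of_nonneg_left haux
          positivity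
      _ = C * K₂ * (r₁ ^ i * (2:ℝ) ^ (-(m * max (L - ξ₁ * (i:ℝ)) 0))) := by
          rw [hK₂def]; ring
  have hg0 : ∀ i, 0 ≤ g i := by
    intro i
    have h1 : (0:ℝ) ≤ r₁ ^ i := pow_nonneg hr₁0.le i
    have h2 : (0:ℝ) < (2:ℝ) ^ (-(m * max (L - ξ₁ * (i:ℝ)) 0)) := rpow_pos_of_pos two_pos _
    rw [hgdef]; positivity
  have hrpow_le_one : ∀ i : ℕ, (2:ℝ) ^ (-(m * max (L - ξ₁ * (i:ℝ)) 0)) ≤ 1 := by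
    intro i
    apply rpow_le_one_of_one_le_of_nonpos one_le_two
    have : (0:ℝ) ≤ max (L - ξ₁ * (i:ℝ)) 0 := le_max_right _ _
    nlinarith
  have hgle : ∀ i, g i ≤ (C * K₂) * r₁ ^ i := by
    intro i
    have h1 : (0:ℝ) ≤ r₁ ^ i := pow_nonneg hr₁0.le i
    have h2 := mul_le_mul_of_nonneg_left (hrpow_le_one i)
      (mul_nonneg (mul_pos hC hK₂0).le h1)
    calc g i = C * K₂ * r₁ ^ i * (2:ℝ) ^ (-(m * max (L - ξ₁ * (i:ℝ)) 0)) := by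
          rw [hgdef]; ring
      _ ≤ C * K₂ * r₁ ^ i * 1 := h2
      _ = (C * K₂) * r₁ ^ i := by ring
  have hgs : Summable g := (hgeom₁.mul_left (C * K₂)).of_nonneg_of_le hg0 hgle
  have houter : Summable fun i : ℕ => ∑' j : ℕ, G (i, j) :=
    hgs.of_nonneg_of_le (fun i => tsum_nonneg fun j => hG0 (i, j)) hinner_le
  -- assemble
  have hdivpos : (0:ℝ) ≤ L / ξ₁ := (div_pos hL hξ₁).le
  obtain ⟨N, hNle, hNge, hNsmall⟩ :
      ∃ N : ℕ, (N:ℝ) ≤ L / ξ₁ + 1 ∧ L ≤ ξ₁ * (N:ℝ) ∧ ∀ i : ℕ, i < N → (i:ℝ) ≤ L / ξ₁ := by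
    refine ⟨⌊L / ξ₁⌋₊ + 1, ?_, ?_, ?_⟩
    · push_cast
      have := Nat.floor_le hdivpos
      linarith
    · have h1 : L / ξ₁ < ((⌊L / ξ₁⌋₊ + 1 : ℕ):ℝ) := by
        push_cast; exact Nat.lt_floor_add_one _
      calc L = (L / ξ₁) * ξ₁ := (div_mul_cancel₀ _ hξ₁.ne').symm
        _ ≤ ((⌊L / ξ₁⌋₊ + 1 : ℕ):ℝ) * ξ₁ := by nlinarith
        _ = ξ₁ * ((⌊L / ξ₁⌋₊ + 1 : ℕ):ℝ) := mul_comm _ _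
    · intro i hi
      exact (Nat.le_floor_iff hdivpos).mp (Nat.lt_succ_iff.mp hi)
  have hfin : ∀ i ∈ Finset.range N, g i = C * K₂ * (2:ℝ) ^ (-(m * L)) := by
    intro i hi
    have hi' : (i:ℝ) ≤ L / ξ₁ := hNsmall i (Finset.mem_range.mp hi)
    have hxi : ξ₁ * (i:ℝ) ≤ L := by
      calc ξ₁ * (i:ℝ) ≤ ξ₁ * (L / ξ₁) := by nlinarith
        _ = L := mul_div_cancel₀ _ hξ₁.ne'
    have hmax : max (L - ξ₁ * (i:ℝ)) 0 = L - ξ₁ * (i:ℝ) := max_eq_left (by linarith)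
    rw [hgdef]
    simp only [hmax]
    congr 1
    rw [hr₁def, ← rpow_natCast ((2:ℝ) ^ (-(m * ξ₁))) i, ← rpow_mul (by norm_num : (0:ℝ) ≤ 2),
      ← rpow_add two_pos]
    congr 1
    ring
  have hrN : r₁ ^ N ≤ (2:ℝ) ^ (-(m * L)) := by
    rw [hr₁def, ← rpow_natCast ((2:ℝ) ^ (-(m * ξ₁))) N, ← rpow_mul (by norm_num : (0:ℝ) ≤ 2)]
    apply rpow_le_rpow_of_exponent_le one_le_two
    nlinarith [mul_le_mul_of_nonneg_left hNge hm.le]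
  have htail : ∑' i : ℕ, g (i + N) ≤ C * K₂ * K₁ * (2:ℝ) ^ (-(m * L)) := by
    have h1 : Summable fun i : ℕ => g (i + N) := (summable_nat_add_iff N).mpr hgs
    have h2 : Summable fun i : ℕ => (C * K₂ * r₁ ^ N) * r₁ ^ i := hgeom₁.mul_left _
    calc ∑' i : ℕ, g (i + N) ≤ ∑' i : ℕ, (C * K₂ * r₁ ^ N) * r₁ ^ i := by
          apply Summable.tsum_le_tsum _ h1 h2
          intro i
          calc g (i + N) ≤ (C * K₂) * r₁ ^ (i + N) := hgle _
            _ = (C * K₂ * r₁ ^ N) * r₁ ^ i := by rw [pow_add]; ring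
      _ = (C * K₂ * r₁ ^ N) * ∑' i : ℕ, r₁ ^ i := tsum_mul_left
      _ = (C * K₂ * r₁ ^ N) * K₁ := by rw [tsum_geometric_of_lt_one hr₁0.le hr₁1, hK₁def]
      _ = (C * K₂ * K₁) * r₁ ^ N := by ring
      _ ≤ (C * K₂ * K₁) * (2:ℝ) ^ (-(m * L)) :=
          mul_le_mul_of_nonneg_left hrN (mul_nonneg (mul_nonneg hC.le hK₂0.le) hK₁0.le)
      _ = C * K₂ * K₁ * (2:ℝ) ^ (-(m * L)) := by ring
  have main : ‖∑' ℓ : S, a ℓ‖ ≤ C * K₂ * (1 / ξ₁ + 1 + K₁) * (1 + L) * (2:ℝ) ^ (-(m * L)) := by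
    calc ‖∑' ℓ : S, a ℓ‖ ≤ ∑' ℓ : S, ‖a ℓ‖ := norm_tsum_le_tsum_norm hnormS
      _ ≤ ∑' ℓ : S, F ℓ := Summable.tsum_le_tsum (fun ℓ => hFa ℓ) hnormS hFsS
      _ = ∑' ℓ : ℕ × ℕ, S.indicator F ℓ := tsum_subtype S F
      _ = ∑' ℓ : ℕ × ℕ, G ℓ := by rw [hGind]
      _ = ∑' i : ℕ, ∑' j : ℕ, G (i, j) := Summable.tsum_prod' hGs hGinner
      _ ≤ ∑' i : ℕ, g i := Summable.tsum_le_tsum hinner_le houter hgs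
      _ = ∑ i ∈ Finset.range N, g i + ∑' i : ℕ, g (i + N) := (Summable.sum_add_tsum_nat_add N hgs).symm
      _ ≤ (N:ℝ) * (C * K₂ * (2:ℝ) ^ (-(m * L))) + C * K₂ * K₁ * (2:ℝ) ^ (-(m * L)) := by
          rw [Finset.sum_congr rfl hfin, Finset.sum_const, Finset.card_range, nsmul_eq_mul]
          exact add_le_add_right htail _
      _ ≤ C * K₂ * (1 / ξ₁ + 1 + K₁) * (1 + L) * (2:ℝ) ^ (-(m * L)) := by
          have h1 : (0:ℝ) < 1 / ξ₁ := by positivity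
          have hNle' : (N:ℝ) ≤ L * (1 / ξ₁) + 1 := by rw [mul_one_div]; exact hNle
          have hscalar : (N:ℝ) + K₁ ≤ (1 / ξ₁ + 1 + K₁) * (1 + L) := by
            nlinarith [mul_pos hK₁0 hL, mul_pos h1 hL]
          have hx : (0:ℝ) ≤ C * K₂ * (2:ℝ) ^ (-(m * L)) :=
            mul_nonneg (mul_nonneg hC.le hK₂0.le) (rpow_pos_of_pos two_pos _).le
          calc (N:ℝ) * (C * K₂ * (2:ℝ) ^ (-(m * L))) + C * K₂ * K₁ * (2:ℝ) ^ (-(m * L))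
              = ((N:ℝ) + K₁) * (C * K₂ * (2:ℝ) ^ (-(m * L))) := by ring
            _ ≤ ((1 / ξ₁ + 1 + K₁) * (1 + L)) * (C * K₂ * (2:ℝ) ^ (-(m * L))) :=
                mul_le_mul_of_nonneg_right hscalar hx
            _ = C * K₂ * (1 / ξ₁ + 1 + K₁) * (1 + L) * (2:ℝ) ^ (-(m * L)) := by ring
  rw [neg_mul]
  exact main
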